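/- Let K be a Cantor space and let α, β : K ≃ₜ K be homeomorphisms with α ∘ β = β ∘ α and α minimal. Let φ_a and φ_b be the homeomorphisms of the product space K × ∂F₂ given by φ_a(x, s) = (α(x), ∂_a(s)) and φ_b(x, s) = (β(x), ∂_b(s)), and let G be the subgroup of the homeomorphism group of K × ∂F₂ generated by φ_a and φ_b. Then the action of G on K × ∂F₂ is minimal: for every point p ∈ K × ∂F₂ the orbit {g(p) : g ∈ G} is dense in K × ∂F₂. -/

import Mathlib

/-- The alphabet `{a, a⁻¹, b, b⁻¹}`, encoded as `Fin 4` with `a = 0`, `a⁻¹ = 1`, `b = 2`,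
`b⁻¹ = 3`. -/
abbrev A4 : Type := Fin 4

/-- The formal-inverse involution on the alphabet, swapping `a ↔ a⁻¹` and `b ↔ b⁻¹`. -/
def inv4 : A4 → A4 := ![1, 0, 3, 2]

/-- The Gromov boundary `∂F₂` of the free group on two generators, modelled as the space of
infinite reduced words over `{a, a⁻¹, b, b⁻¹}`, topologized as a subspace of `A4 ^ ℕ`. -/
abbrev Bdry : Type := {s : ℕ → A4 // ∀ n, s (n + 1) ≠ inv4 (s n)}

/-- The left-multiplication action of the letter `ℓ` on raw infinite words: cancel the first
letter if it is `ℓ⁻¹`, otherwise prepend `ℓ`. -/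
def rawAct (ℓ : A4) (s : ℕ → A4) : ℕ → A4 :=
  if s 0 = inv4 ℓ then fun n => s (n + 1)
  else fun n => Nat.casesOn n ℓ fun m => s m

/-! ### Auxiliary lemmas on the alphabet and raw actions -/

lemma inv4_inv4 (ℓ : A4) : inv4 (inv4 ℓ) = ℓ := by fin_cases ℓ <;> rfl

lemma rawAct_inv_rawAct (ℓ : A4) (s : ℕ → A4) (hs : ∀ n, s (n + 1) ≠ inv4 (s n)) :
    rawAct (inv4 ℓ) (rawAct ℓ s) = s := by
  by_cases h : s 0 = inv4 ℓ
  · have h0 : rawAct ℓ s = fun n => s (n + 1) := by rw [rawAct, if_pos h]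
    have ht : ¬ ((fun n => s (n + 1)) 0 = inv4 (inv4 ℓ)) := by
      show ¬ (s 1 = inv4 (inv4 ℓ)); rw [← h]; exact hs 0
    rw [h0, rawAct, if_neg ht]
    funext n
    cases n with
    | zero => exact h.symm
    | succ m => rfl
  · have h0 : rawAct ℓ s = fun n => Nat.casesOn n ℓ fun m => s m := by rw [rawAct, if_neg h]
    have ht : ((fun n => Nat.casesOn n ℓ fun m => s m : ℕ → A4)) 0 = inv4 (inv4 ℓ) := by
      show ℓ = inv4 (inv4 ℓ); rw [inv4_inv4]
    rw [h0, rawAct, if_pos ht]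

/-- The action of a whole list of letters (leftmost letter acting last). -/
def rawActList (w : List A4) (s : ℕ → A4) : ℕ → A4 := w.foldr rawAct s

/-- The concatenation of a finite word with an infinite word. -/
def appendW (w : List A4) (s : ℕ → A4) : ℕ → A4 :=
  fun n => if h : n < w.length then w.get ⟨n, h⟩ else s (n - w.length)

lemma appendW_head (w : List A4) (s : ℕ → A4) :
    (w ++ [s 0]).head? = some (appendW w s 0) := by
  cases w with
  | nil => simp [appendW]
  | cons c w' => simp [appendW]

lemma appendW_append_left (t r : List A4) (s : ℕ → A4) (i : ℕ) (hit : i < t.length) :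
    appendW (t ++ r) s i = t.get ⟨i, hit⟩ := by
  have hiw : i < (t ++ r).length := by simp; omega
  show (if h : i < (t ++ r).length then (t ++ r).get ⟨i, h⟩ else s (i - (t ++ r).length)) = _
  rw [dif_pos hiw]
  simp [List.getElem_append_left, hit]

/-- If the concatenation `w ++ s` has no cancellations, the action of the list `w` on `s`
is just concatenation. -/
lemma rawActList_eq_appendW (w : List A4) (s : ℕ → A4)
    (h : List.Chain' (fun x y => y ≠ inv4 x) (w ++ [s 0])) :
    rawActList w s = appendW w s := by
  induction w with
  | nil => funext n; simp [rawActList, appendW]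
  | cons ℓ w ih =>
    rw [List.cons_append, List.Chain', List.isChain_cons] at h
    obtain ⟨hhead, htail⟩ := h
    have hh : appendW w s 0 ≠ inv4 ℓ :=
      hhead _ (by rw [appendW_head w s]; exact Option.mem_some_iff.mpr rfl)
    have h1 : rawActList (ℓ :: w) s = rawAct ℓ (rawActList w s) := rfl
    rw [h1, ih htail, rawAct, if_neg hh]
    funext n
    cases n with
    | zero => simp [appendW]
    | succ m =>
      simp only [appendW, List.length_cons, Nat.succ_sub_succ]
      by_cases hm : m < w.length
      · rw [dif_pos hm, dif_pos (by omega : m + 1 < w.length + 1)]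
        rfl
      · rw [dif_neg hm, dif_neg (by omega : ¬ (m + 1 < w.length + 1))]

/-- Every open set in a countable product of discrete spaces contains, around each of its
points, a cylinder determined by finitely many coordinates. -/
lemma cylinder_mem {X : Type*} [TopologicalSpace X] [DiscreteTopology X]
    {W : Set (ℕ → X)} (hW : IsOpen W) {f : ℕ → X} (hf : f ∈ W) :
    ∃ m, ∀ r : ℕ → X, (∀ i < m, r i = f i) → r ∈ W := by
  have h : W ∈ nhds f := hW.mem_nhds hf
  rw [nhds_pi, Filter.mem_pi] at h
  obtain ⟨I, hIfin, t, ht, hsub⟩ := h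
  obtain ⟨m, hm⟩ := hIfin.bddAbove
  refine ⟨m + 1, fun r hr => hsub ?_⟩
  intro i hi
  rw [hr i (by have := hm hi; omega)]
  exact mem_of_mem_nhds (ht i)

lemma chain'_replicate_cons {R : A4 → A4 → Prop} (c d : A4) (hcc : R c c) (hcd : R c d)
    (l : List A4) (hl : List.Chain' R (d :: l)) :
    ∀ n, List.Chain' R (List.replicate n c ++ d :: l)
  | 0 => hl
  | n + 1 => by
    rw [List.replicate_succ, List.cons_append, List.Chain', List.isChain_cons]
    refine ⟨fun y hy => ?_, chain'_replicate_cons c d hcc hcd l hl n⟩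
    cases n with
    | zero => simp at hy; subst hy; exact hcd
    | succ k => rw [List.replicate_succ] at hy; simp at hy; subst hy; exact hcc

/-! ### The homeomorphisms/permutations associated to letters and words -/

section
variable {K : Type*} [TopologicalSpace K]

/-- The homeomorphism of `K` associated to each letter. -/
def rho (α β : K ≃ₜ K) : A4 → (K ≃ₜ K) := ![α, α.symm, β, β.symm]

/-- The homeomorphism of `K` associated to a word (leftmost letter acting last). -/
def rhoW (α β : K ≃ₜ K) : List A4 → (K ≃ₜ K)
  | [] => Homeomorph.refl K
  | ℓ :: w => (rhoW α β w).trans (rho α β ℓ)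

lemma rhoW_cons (α β : K ≃ₜ K) (ℓ : A4) (w : List A4) (x : K) :
    rhoW α β (ℓ :: w) x = rho α β ℓ (rhoW α β w x) := rfl

lemma rhoW_append (α β : K ≃ₜ K) (u v : List A4) (x : K) :
    rhoW α β (u ++ v) x = rhoW α β u (rhoW α β v x) := by
  induction u with
  | nil => rfl
  | cons ℓ u ih => rw [List.cons_append, rhoW_cons, ih, rhoW_cons]

lemma rhoW_replicate_zero (α β : K ≃ₜ K) (n : ℕ) (x : K) :
    rhoW α β (List.replicate n 0) x = (α.toEquiv ^ n) x := by
  induction n with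
  | zero => rfl
  | succ n ih =>
    rw [List.replicate_succ, rhoW_cons, ih, pow_succ']
    rfl

lemma rhoW_replicate_one (α β : K ≃ₜ K) (n : ℕ) (x : K) :
    rhoW α β (List.replicate n 1) x = (α.toEquiv⁻¹ ^ n) x := by
  induction n with
  | zero => rfl
  | succ n ih =>
    rw [List.replicate_succ, rhoW_cons, ih, pow_succ']
    rfl

lemma rhoW_block (α β : K ≃ₜ K) (k : ℤ) (x : K) :
    rhoW α β (List.replicate k.natAbs (if 0 ≤ k then 0 else 1)) x = (α.toEquiv ^ k) x := by
  by_cases hk : 0 ≤ k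
  · rw [if_pos hk, rhoW_replicate_zero]
    congr 1
    rw [← zpow_natCast]
    congr 1
    omega
  · rw [if_neg hk, rhoW_replicate_one]
    congr 1
    rw [inv_pow, ← zpow_natCast, ← zpow_neg]
    congr 1
    omega

/-- The permutation of `K × Bdry` associated to each letter. -/
def perm4 (φa φb : (K × Bdry) ≃ₜ (K × Bdry)) : A4 → Equiv.Perm (K × Bdry) :=
  ![φa.toEquiv, φa.toEquiv⁻¹, φb.toEquiv, φb.toEquiv⁻¹]

/-- The permutation of `K × Bdry` associated to a word. -/
def permW (φa φb : (K × Bdry) ≃ₜ (K × Bdry)) (w : List A4) : Equiv.Perm (K × Bdry) :=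
  (w.map (perm4 φa φb)).prod

lemma permW_mem (φa φb : (K × Bdry) ≃ₜ (K × Bdry)) (w : List A4) :
    permW φa φb w ∈ Subgroup.closure ({φa.toEquiv, φb.toEquiv} : Set (Equiv.Perm (K × Bdry))) := by
  apply Subgroup.list_prod_mem
  intro g hg
  rw [List.mem_map] at hg
  obtain ⟨ℓ, -, rfl⟩ := hg
  have ha : φa.toEquiv ∈ Subgroup.closure ({φa.toEquiv, φb.toEquiv} : Set (Equiv.Perm (K × Bdry))) :=
    Subgroup.subset_closure (by simp)
  have hb : φb.toEquiv ∈ Subgroup.closure ({φa.toEquiv, φb.toEquiv} : Set (Equiv.Perm (K × Bdry))) :=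
    Subgroup.subset_closure (by simp)
  fin_cases ℓ
  · exact ha
  · exact inv_mem ha
  · exact hb
  · exact inv_mem hb

lemma perm4_apply (α β : K ≃ₜ K) (φa φb : (K × Bdry) ≃ₜ (K × Bdry))
    (hφa : ∀ p : K × Bdry,
      (φa p).1 = α p.1 ∧ ((φa p).2 : ℕ → A4) = rawAct 0 (p.2 : ℕ → A4))
    (hφb : ∀ p : K × Bdry,
      (φb p).1 = β p.1 ∧ ((φb p).2 : ℕ → A4) = rawAct 2 (p.2 : ℕ → A4))
    (ℓ : A4) (p : K × Bdry) :
    ((perm4 φa φb ℓ) p).1 = rho α β ℓ p.1 ∧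
      (((perm4 φa φb ℓ) p).2 : ℕ → A4) = rawAct ℓ (p.2 : ℕ → A4) := by
  have key : ∀ (φ : (K × Bdry) ≃ₜ (K × Bdry)) (γ : K ≃ₜ K) (c : A4),
      (∀ p : K × Bdry, (φ p).1 = γ p.1 ∧ ((φ p).2 : ℕ → A4) = rawAct c (p.2 : ℕ → A4)) →
      inv4 c = c + 1 →
      ∀ p : K × Bdry, ((φ.toEquiv⁻¹) p).1 = γ.symm p.1 ∧
        (((φ.toEquiv⁻¹) p).2 : ℕ → A4) = rawAct (c + 1) (p.2 : ℕ → A4) := by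
    intro φ γ c hφ hc p
    set q := φ.toEquiv⁻¹ p with hq
    have hpq : φ q = p := by
      show φ.toEquiv q = p
      rw [hq]; exact φ.toEquiv.apply_symm_apply p
    obtain ⟨h1, h2⟩ := hφ q
    rw [hpq] at h1 h2
    constructor
    · rw [h1]; exact (γ.symm_apply_apply q.1).symm
    · rw [← hc, h2, rawAct_inv_rawAct c _ q.2.2]
  fin_cases ℓ
  · exact hφa p
  · exact key φa α 0 hφa rfl p
  · exact hφb p
  · exact key φb β 2 hφb rfl p

lemma permW_apply (α β : K ≃ₜ K) (φa φb : (K × Bdry) ≃ₜ (K × Bdry))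
    (hφa : ∀ p : K × Bdry,
      (φa p).1 = α p.1 ∧ ((φa p).2 : ℕ → A4) = rawAct 0 (p.2 : ℕ → A4))
    (hφb : ∀ p : K × Bdry,
      (φb p).1 = β p.1 ∧ ((φb p).2 : ℕ → A4) = rawAct 2 (p.2 : ℕ → A4))
    (w : List A4) (p : K × Bdry) :
    ((permW φa φb w) p).1 = rhoW α β w p.1 ∧
      (((permW φa φb w) p).2 : ℕ → A4) = rawActList w (p.2 : ℕ → A4) := by
  induction w with
  | nil => exact ⟨rfl, rfl⟩
  | cons ℓ w ih =>
    have hsplit : permW φa φb (ℓ :: w) p = perm4 φa φb ℓ (permW φa φb w p) := by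
      show ((perm4 φa φb ℓ) * (permW φa φb w)) p = _
      rw [Equiv.Perm.mul_apply]
    obtain ⟨ih1, ih2⟩ := ih
    obtain ⟨k1, k2⟩ := perm4_apply α β φa φb hφa hφb ℓ (permW φa φb w p)
    constructor
    · rw [hsplit, k1, ih1, rhoW_cons]
    · rw [hsplit, k2, ih2]
      rfl

end

/-- Let `K` be a Cantor space, `α β : K ≃ₜ K` commuting homeomorphisms with `α`
minimal, and let `φa, φb` be the homeomorphisms of `K × ∂F₂` given by
`φa(x, s) = (α x, ∂ₐ s)` and `φb(x, s) = (β x, ∂_b s)`. Then the action of the subgroup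
generated by `φa` and `φb` on `K × ∂F₂` is minimal: every orbit is dense. -/
theorem diagonal_action_on_product_with_boundary_minimal
    {K : Type*} [TopologicalSpace K] [CompactSpace K] [TopologicalSpace.MetrizableSpace K]
    [TotallyDisconnectedSpace K] [Nonempty K]
    (hperf : Perfect (Set.univ : Set K))
    (α β : K ≃ₜ K)
    (hcomm : ∀ x : K, α (β x) = β (α x))
    (hmin : ∀ x : K, Dense (Set.range fun n : ℤ => (α.toEquiv ^ n) x))
    (φa φb : (K × Bdry) ≃ₜ (K × Bdry))
    (hφa : ∀ p : K × Bdry,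
      (φa p).1 = α p.1 ∧ ((φa p).2 : ℕ → A4) = rawAct 0 (p.2 : ℕ → A4))
    (hφb : ∀ p : K × Bdry,
      (φb p).1 = β p.1 ∧ ((φb p).2 : ℕ → A4) = rawAct 2 (p.2 : ℕ → A4)) :
    ∀ p : K × Bdry,
      Dense {q : K × Bdry |
        ∃ g ∈ Subgroup.closure ({φa.toEquiv, φb.toEquiv} : Set (Equiv.Perm (K × Bdry))),
          g p = q} := by
  intro p
  rw [dense_iff_inter_open]
  intro O hO hOne
  obtain ⟨q, hqO⟩ := hOne
  obtain ⟨U, V, hU, hV, hqU, hqV, hUV⟩ := isOpen_prod_iff.1 hO q.1 q.2 (by simpa using hqO)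
  obtain ⟨W', hW', hWeq⟩ := isOpen_induced_iff.1 hV
  have hqW' : (q.2 : ℕ → A4) ∈ W' := by rw [← hWeq] at hqV; exact hqV
  obtain ⟨m, hm⟩ := cylinder_mem hW' hqW'
  set s : ℕ → A4 := (p.2 : ℕ → A4) with hs
  set qv : ℕ → A4 := (q.2 : ℕ → A4) with hqv
  set t : List A4 := (List.range m).map qv with ht
  have ht_len : t.length = m := by simp [ht]
  have ht_chain : List.Chain' (fun x y => y ≠ inv4 x) t := by
    rw [ht, List.Chain', List.isChain_map]
    cases m with
    | zero => simp
    | succ mm =>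
      rw [List.isChain_range_succ]
      intro i _
      exact q.2.2 i
  -- choose the letter ℓL adjacent to s
  obtain ⟨ℓL, hℓ23, hℓcond⟩ : ∃ ℓ : A4, (ℓ = 2 ∨ ℓ = 3) ∧ s 0 ≠ inv4 ℓ := by
    by_cases h3 : s 0 = 3
    · exact ⟨3, Or.inr rfl, by rw [h3]; decide⟩
    · exact ⟨2, Or.inl rfl, fun e => h3 (e.trans (by decide))⟩
  -- choose the letter m' adjacent to t
  obtain ⟨m', hm'23, hm'cond⟩ :
      ∃ m' : A4, (m' = 2 ∨ m' = 3) ∧ ∀ x ∈ t.getLast?, m' ≠ inv4 x := by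
    cases hgl : t.getLast? with
    | none => exact ⟨2, Or.inl rfl, by simp⟩
    | some a =>
      by_cases h : inv4 a = 2
      · refine ⟨3, Or.inr rfl, ?_⟩
        intro x hx
        rw [Option.mem_some_iff] at hx
        subst hx
        rw [h]; decide
      · refine ⟨2, Or.inl rfl, ?_⟩
        intro x hx
        rw [Option.mem_some_iff] at hx
        subst hx
        exact fun e => h e.symm
  -- minimality: find k ≠ 0 with α^k z landing in the right open set
  set z : K := rho α β ℓL p.1 with hz
  set F : K ≃ₜ K := (rho α β m').trans (rhoW α β t) with hF
  have hUz_open : IsOpen (F ⁻¹' U) := hU.preimage F.continuous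
  have hUz_ne : (F ⁻¹' U).Nonempty := ⟨F.symm q.1, by simp [Set.mem_preimage]; exact hqU⟩
  haveI hneb : Filter.NeBot (nhdsWithin z {z}ᶜ) := by
    have := hperf.acc z (Set.mem_univ z)
    rw [AccPt] at this
    simpa using this
  have hdense : Dense ((Set.range fun n : ℤ => (α.toEquiv ^ n) z) \ {z}) :=
    Dense.diff_singleton (hmin z) z
  obtain ⟨y, hyU, hyOrb⟩ := hdense.inter_open_nonempty _ hUz_open hUz_ne
  obtain ⟨⟨k, hky⟩, hyne⟩ := hyOrb
  have hk0 : k ≠ 0 := by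
    rintro rfl
    apply hyne
    rw [← hky]
    simp
  -- the block letter
  obtain ⟨c, hc01, hcblk⟩ : ∃ c : A4, (c = 0 ∨ c = 1) ∧
      ∀ x : K, rhoW α β (List.replicate k.natAbs c) x = (α.toEquiv ^ k) x := by
    by_cases hk : 0 ≤ k
    · exact ⟨0, Or.inl rfl, fun x => by
        have := rhoW_block α β k x; rw [if_pos hk] at this; exact this⟩
    · exact ⟨1, Or.inr rfl, fun x => by
        have := rhoW_block α β k x; rw [if_neg hk] at this; exact this⟩
  set w : List A4 := t ++ m' :: (List.replicate k.natAbs c ++ [ℓL]) with hw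
  -- the chain condition: no cancellation anywhere in w ++ s
  have hchain : List.Chain' (fun x y => y ≠ inv4 x) (w ++ [s 0]) := by
    have hre : w ++ [s 0] = t ++ m' :: (List.replicate k.natAbs c ++ ℓL :: [s 0]) := by
      simp [hw]
    rw [hre, List.Chain', List.isChain_append]
    refine ⟨ht_chain, ?_, ?_⟩
    · rw [List.isChain_cons]
      constructor
      · intro y hy
        obtain ⟨n, hn⟩ : ∃ n, k.natAbs = n + 1 := ⟨k.natAbs - 1, by omega⟩
        rw [hn, List.replicate_succ] at hy
        simp at hy
        subst hy
        rcases hc01 with rfl | rfl <;> rcases hm'23 with rfl | rfl <;> decide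
      · apply chain'_replicate_cons
        · rcases hc01 with rfl | rfl <;> decide
        · rcases hc01 with rfl | rfl <;> rcases hℓ23 with rfl | rfl <;> decide
        · rw [List.Chain', List.isChain_cons_cons]
          exact ⟨hℓcond, List.isChain_singleton _⟩
    · intro x hx y hy
      simp at hy
      subst hy
      exact hm'cond x hx
  -- the group element
  have hg := permW_apply α β φa φb hφa hφb w p
  refine ⟨permW φa φb w p, hUV ⟨?_, ?_⟩, permW φa φb w, permW_mem φa φb w, rfl⟩
  · -- first coordinate lands in U
    rw [hg.1, hw, rhoW_append, rhoW_cons, rhoW_append]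
    have h1 : rhoW α β [ℓL] p.1 = z := rfl
    rw [h1, hcblk z]
    have hky' : (α.toEquiv ^ k) z = y := hky
    rw [hky']
    exact hyU
  · -- second coordinate lands in V
    show (permW φa φb w p).2 ∈ V
    rw [← hWeq]
    apply hm
    intro i hi
    have hit : i < t.length := by rw [ht_len]; exact hi
    have hiw : i < w.length := by rw [hw]; simp only [List.length_append]; omega
    have : ((permW φa φb w p).2 : ℕ → A4) i = appendW w s i := by
      rw [hg.2, rawActList_eq_appendW w s hchain]
    rw [this]
    show appendW (t ++ m' :: (List.replicate k.natAbs c ++ [ℓL])) s i = qv i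
    rw [appendW_append_left _ _ s i hit]
    show (List.map qv (List.range m)).get ⟨i, hit⟩ = qv i
    simp [List.get_eq_getElem]
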